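/- arXiv:1708.09502 — 2 statements merged into one kernel-verified Lean document; each statement's English description precedes it below -/
import Mathlib

section
/- Let F, Z : [0,τ] → ℝ (one-dimensional case) be cadlag functions of bounded variation with total variation norms ‖F‖_v = |F(0)| + ∫_{(0,τ]} |dF(u)| and similarly for Z. Define Z̄(u) = ∫_{[u,τ]} dZ. Then |∫_{[0,τ]} F(x) dZ(x)| ≤ (sup_{u ∈ [0,τ]} |Z̄(u)|) · ‖F‖_v. -/
open MeasureTheory Set

/-- Integral of a real function against a signed measure, defined via the Jordan
decomposition. -/
noncomputable def sintegral (ν : MeasureTheory.SignedMeasure ℝ) (f : ℝ → ℝ) : ℝ :=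
  (∫ x, f x ∂ν.toJordanDecomposition.posPart) - ∫ x, f x ∂ν.toJordanDecomposition.negPart

lemma sm_apply (ν : SignedMeasure ℝ) {s : Set ℝ} (hs : MeasurableSet s) :
    ν s = (ν.toJordanDecomposition.posPart s).toReal
        - (ν.toJordanDecomposition.negPart s).toReal := by
  conv_lhs => rw [← ν.toSignedMeasure_toJordanDecomposition]
  rw [JordanDecomposition.toSignedMeasure, Measure.toSignedMeasure_sub_apply hs]
  rfl

lemma restrict_jordan_null (ν : SignedMeasure ℝ) {A : Set ℝ} (hA : MeasurableSet A)
    {t : Set ℝ} (ht : MeasurableSet t) (h : t ∩ A = ∅) :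
    (SignedMeasure.toJordanDecomposition (ν.restrict A)).posPart t = 0 ∧
      (SignedMeasure.toJordanDecomposition (ν.restrict A)).negPart t = 0 := by
  obtain ⟨i, hi₁, hi₂, hi₃, hpos, hneg⟩ := SignedMeasure.toJordanDecomposition_spec (ν.restrict A)
  have key : ∀ u : Set ℝ, MeasurableSet u → (ν.restrict A) (u ∩ t) = 0 := by
    intro u hu
    rw [VectorMeasure.restrict_apply ν hA (hu.inter ht)]
    have : u ∩ t ∩ A = ∅ := by
      apply Set.eq_empty_of_subset_empty
      rw [← h]
      exact Set.inter_subset_inter_left _ Set.inter_subset_right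
    rw [this, VectorMeasure.empty]
  constructor
  · rw [hpos, SignedMeasure.toMeasureOfZeroLE_apply _ hi₂ hi₁ ht]
    simp [key i hi₁]
  · rw [hneg, SignedMeasure.toMeasureOfLEZero_apply _ hi₃ hi₁.compl ht]
    simp [key iᶜ hi₁.compl]

lemma int_toReal (γ : Measure ℝ) [IsFiniteMeasure γ] (α : Measure ℝ) [IsFiniteMeasure α] :
    Integrable (fun x => (α (Ioc 0 x)).toReal) γ := by
  refine ⟨(ENNReal.measurable_toReal.comp ?_).aestronglyMeasurable, ?_⟩
  · exact (Monotone.measurable (fun a b hab => measure_mono (Ioc_subset_Ioc_right hab)))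
  · apply HasFiniteIntegral.of_bounded (C := (α univ).toReal)
    filter_upwards with x
    rw [Real.norm_eq_abs, abs_of_nonneg ENNReal.toReal_nonneg]
    exact ENNReal.toReal_mono (measure_ne_top _ _) (measure_mono (subset_univ _))

lemma int_phi (γ : Measure ℝ) [IsFiniteMeasure γ] (β : Measure ℝ) [IsFiniteMeasure β] :
    Integrable (fun u => (Ioi (0:ℝ)).indicator (fun u => (β (Ici u)).toReal) u) γ := by
  refine ⟨(Measurable.indicator ?_ measurableSet_Ioi).aestronglyMeasurable, ?_⟩
  · exact ENNReal.measurable_toReal.comp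
      (Antitone.measurable (fun a b hab => measure_mono (Ici_subset_Ici.mpr hab)))
  · apply HasFiniteIntegral.of_bounded (C := (β univ).toReal)
    filter_upwards with u
    rw [Real.norm_eq_abs]
    by_cases hu : u ∈ Ioi (0:ℝ)
    · rw [Set.indicator_of_mem hu, abs_of_nonneg ENNReal.toReal_nonneg]
      exact ENNReal.toReal_mono (measure_ne_top _ _) (measure_mono (subset_univ _))
    · rw [Set.indicator_of_notMem hu, abs_zero]
      exact ENNReal.toReal_nonneg

lemma fub (α β : Measure ℝ) [IsFiniteMeasure α] [IsFiniteMeasure β] :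
    ∫ x, (α (Ioc 0 x)).toReal ∂β
      = ∫ u, (Ioi (0:ℝ)).indicator (fun u => (β (Ici u)).toReal) u ∂α := by
  set s : Set (ℝ × ℝ) := {p | 0 < p.2 ∧ p.2 ≤ p.1} with hs_def
  have hs : MeasurableSet s := by
    apply MeasurableSet.inter
    · exact measurableSet_lt measurable_const measurable_snd
    · exact measurableSet_le measurable_snd measurable_fst
  have h1 : ∀ x : ℝ, (α (Ioc 0 x)).toReal
      = ∫ u, s.indicator (fun _ => (1:ℝ)) (x, u) ∂α := by
    intro x
    have he : (fun u => s.indicator (fun _ => (1:ℝ)) (x, u))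
        = (Ioc 0 x).indicator (fun _ => (1:ℝ)) := by
      ext u
      by_cases h : u ∈ Ioc 0 x
      · rw [Set.indicator_of_mem h]
        exact Set.indicator_of_mem (show (x, u) ∈ s from ⟨h.1, h.2⟩) _
      · rw [Set.indicator_of_notMem h, Set.indicator_of_notMem]
        intro hc; exact h ⟨hc.1, hc.2⟩
    rw [he, integral_indicator_const _ measurableSet_Ioc, smul_eq_mul, mul_one]
    rfl
  have h2 : ∀ u : ℝ, (∫ x, s.indicator (fun _ => (1:ℝ)) (x, u) ∂β)
      = (Ioi (0:ℝ)).indicator (fun u => (β (Ici u)).toReal) u := by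
    intro u
    by_cases hu : 0 < u
    · have he : (fun x => s.indicator (fun _ => (1:ℝ)) (x, u))
          = (Ici u).indicator (fun _ => (1:ℝ)) := by
        ext x
        by_cases h : x ∈ Ici u
        · rw [Set.indicator_of_mem h]
          exact Set.indicator_of_mem (show (x, u) ∈ s from ⟨hu, h⟩) _
        · rw [Set.indicator_of_notMem h, Set.indicator_of_notMem]
          intro hc; exact h hc.2
      rw [he, integral_indicator_const _ measurableSet_Ici, smul_eq_mul, mul_one,
        Set.indicator_of_mem (show u ∈ Ioi (0:ℝ) from hu)]
      rfl
    · have he : (fun x => s.indicator (fun _ => (1:ℝ)) (x, u)) = fun _ => (0:ℝ) := by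
        ext x
        exact Set.indicator_of_notMem (fun hc => hu hc.1) _
      rw [he, integral_zero, Set.indicator_of_notMem (show u ∉ Ioi (0:ℝ) from hu)]
  have hint : Integrable (fun p : ℝ × ℝ => s.indicator (fun _ => (1:ℝ)) p) (β.prod α) :=
    (integrable_const (1:ℝ)).indicator hs
  calc ∫ x, (α (Ioc 0 x)).toReal ∂β
      = ∫ x, ∫ u, s.indicator (fun _ => (1:ℝ)) (x, u) ∂α ∂β :=
        integral_congr_ae (Filter.Eventually.of_forall h1)
    _ = ∫ u, ∫ x, s.indicator (fun _ => (1:ℝ)) (x, u) ∂β ∂α :=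
        integral_integral_swap hint
    _ = _ := integral_congr_ae (Filter.Eventually.of_forall h2)

lemma int_expand (β : Measure ℝ) [IsFiniteMeasure β] (c : ℝ)
    (p n : Measure ℝ) [IsFiniteMeasure p] [IsFiniteMeasure n] :
    ∫ x, (c + ((p (Ioc 0 x)).toReal - (n (Ioc 0 x)).toReal)) ∂β
      = (β univ).toReal * c
        + (∫ x, (p (Ioc 0 x)).toReal ∂β - ∫ x, (n (Ioc 0 x)).toReal ∂β) := by
  have e1 : Integrable (fun x => (p (Ioc 0 x)).toReal - (n (Ioc 0 x)).toReal) β := by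
    exact (int_toReal β p).sub (int_toReal β n)
  rw [integral_add (integrable_const c) e1,
    integral_sub (int_toReal β p) (int_toReal β n), integral_const, smul_eq_mul]
  rfl

lemma norm_int_le (γ : Measure ℝ) [IsFiniteMeasure γ] (h : ℝ → ℝ) (S τ : ℝ)
    (hb : ∀ u, |h u| ≤ S * (Ioc (0:ℝ) τ).indicator (fun _ => (1:ℝ)) u) :
    |∫ u, h u ∂γ| ≤ S * (γ (Ioc 0 τ)).toReal := by
  have hint : Integrable (fun u => S * (Ioc (0:ℝ) τ).indicator (fun _ => (1:ℝ)) u) γ :=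
    ((integrable_const (1:ℝ)).indicator measurableSet_Ioc).const_mul S
  have h1 := norm_integral_le_of_norm_le hint
    (Filter.Eventually.of_forall (fun u => by rw [Real.norm_eq_abs]; exact hb u))
  rw [Real.norm_eq_abs] at h1
  calc |∫ u, h u ∂γ| ≤ ∫ u, S * (Ioc (0:ℝ) τ).indicator (fun _ => (1:ℝ)) u ∂γ := h1
    _ = S * (γ (Ioc 0 τ)).toReal := by
        rw [integral_const_mul, integral_indicator_const _ measurableSet_Ioc, smul_eq_mul, mul_one]
        rfl

/-- One-dimensional integration-by-parts bound:
`|∫_{[0,τ]} F dZ| ≤ (sup_{u ∈ [0,τ]} |Z̄(u)|) ⬝ ‖F‖_v`, where `Z̄ u = νZ [u,τ]` and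
`‖F‖_v = |F 0| + |dF|((0,τ])` is the variation norm of `F`. -/
theorem stmt2 (τ : ℝ) (hτ : 0 < τ) (F Z Zbar : ℝ → ℝ)
    (νF νZ : MeasureTheory.SignedMeasure ℝ)
    (hF : ∀ x ∈ Set.Icc (0 : ℝ) τ, F x = F 0 + νF (Set.Ioc 0 x))
    (hZ : ∀ x ∈ Set.Icc (0 : ℝ) τ, Z x = Z 0 + νZ (Set.Ioc 0 x))
    (hZbar : ∀ u, Zbar u = νZ (Set.Icc u τ)) :
    |sintegral (MeasureTheory.VectorMeasure.restrict νZ (Set.Icc 0 τ)) F|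
      ≤ (⨆ u ∈ Set.Icc (0 : ℝ) τ, |Zbar u|)
        * (|F 0| + (MeasureTheory.SignedMeasure.totalVariation νF (Set.Ioc 0 τ)).toReal) := by
  classical
  have hIcc : MeasurableSet (Icc (0:ℝ) τ) := measurableSet_Icc
  set μ : SignedMeasure ℝ := νZ.restrict (Icc 0 τ) with hμdef
  set P := (SignedMeasure.toJordanDecomposition μ).posPart with hPdef
  set N := (SignedMeasure.toJordanDecomposition μ).negPart with hNdef
  set pF := νF.toJordanDecomposition.posPart with hpFdef
  set nF := νF.toJordanDecomposition.negPart with hnFdef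
  set S := ⨆ u ∈ Set.Icc (0 : ℝ) τ, |Zbar u| with hSdef
  -- the Jordan parts of μ vanish outside [0, τ]
  have hnull : ∀ {t : Set ℝ}, MeasurableSet t → t ∩ Icc 0 τ = ∅ → P t = 0 ∧ N t = 0 :=
    fun ht h => restrict_jordan_null νZ hIcc ht h
  have hcompl := hnull hIcc.compl (compl_inter_self _)
  have haeP : ∀ᵐ x ∂P, x ∈ Icc (0:ℝ) τ := by
    rw [MeasureTheory.ae_iff]
    exact hcompl.1
  have haeN : ∀ᵐ x ∂N, x ∈ Icc (0:ℝ) τ := by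
    rw [MeasureTheory.ae_iff]
    exact hcompl.2
  -- the measurable representative of F
  set g : ℝ → ℝ := fun x => F 0 + ((pF (Ioc 0 x)).toReal - (nF (Ioc 0 x)).toReal) with hgdef
  have hFg : ∀ x ∈ Icc (0:ℝ) τ, F x = g x := by
    intro x hx
    rw [hF x hx, hgdef]
    simp only
    rw [sm_apply νF measurableSet_Ioc]
  -- compute the integral
  have hs1 : sintegral μ F = ∫ x, g x ∂P - ∫ x, g x ∂N := by
    rw [sintegral]
    congr 1
    · exact integral_congr_ae (haeP.mono fun x hx => hFg x hx)
    · exact integral_congr_ae (haeN.mono fun x hx => hFg x hx)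
  set φP : ℝ → ℝ := fun u => (Ioi (0:ℝ)).indicator (fun u => (P (Ici u)).toReal) u with hφPdef
  set φN : ℝ → ℝ := fun u => (Ioi (0:ℝ)).indicator (fun u => (N (Ici u)).toReal) u with hφNdef
  set h : ℝ → ℝ :=
    fun u => (Ioi (0:ℝ)).indicator (fun u => (P (Ici u)).toReal - (N (Ici u)).toReal) u with hhdef
  have hpt : ∀ u, h u = φP u - φN u := by
    intro u
    by_cases hu : u ∈ Ioi (0:ℝ) <;>
      simp [hhdef, hφPdef, hφNdef, Set.indicator_of_mem, Set.indicator_of_notMem, hu]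
  have hsub : ∀ (γ : Measure ℝ) (_ : IsFiniteMeasure γ),
      ∫ u, h u ∂γ = ∫ u, φP u ∂γ - ∫ u, φN u ∂γ := by
    intro γ hγ
    rw [show (fun u => h u) = fun u => φP u - φN u from funext hpt]
    exact integral_sub (int_phi γ P) (int_phi γ N)
  have hmain : sintegral μ F
      = ((P univ).toReal - (N univ).toReal) * F 0 + (∫ u, h u ∂pF - ∫ u, h u ∂nF) := by
    rw [hs1, hgdef]
    simp only
    rw [int_expand P (F 0) pF nF, int_expand N (F 0) pF nF,
      fub pF P, fub nF P, fub pF N, fub nF N,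
      hsub pF inferInstance, hsub nF inferInstance, ← hφPdef, ← hφNdef]
    ring
  -- identify the constant term
  have hc0 : (P univ).toReal - (N univ).toReal = Zbar 0 := by
    rw [← sm_apply μ MeasurableSet.univ, hμdef,
      VectorMeasure.restrict_apply νZ hIcc MeasurableSet.univ, univ_inter, hZbar 0]
  -- the supremum S
  set C : ℝ := (νZ.toJordanDecomposition.posPart univ).toReal
      + (νZ.toJordanDecomposition.negPart univ).toReal with hCdef
  have hbound : ∀ u, |Zbar u| ≤ C := by
    intro u
    rw [hZbar u, sm_apply νZ measurableSet_Icc]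
    refine (abs_sub _ _).trans ?_
    rw [abs_of_nonneg ENNReal.toReal_nonneg, abs_of_nonneg ENNReal.toReal_nonneg]
    exact add_le_add
      (ENNReal.toReal_mono (measure_ne_top _ _) (measure_mono (subset_univ _)))
      (ENNReal.toReal_mono (measure_ne_top _ _) (measure_mono (subset_univ _)))
  have hbdd : BddAbove (Set.range fun u => ⨆ _ : u ∈ Set.Icc (0:ℝ) τ, |Zbar u|) := by
    refine ⟨max C 0, ?_⟩
    rintro x ⟨u, rfl⟩
    exact Real.iSup_le (fun _ => (hbound u).trans (le_max_left _ _)) (le_max_right _ _)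
  have hS : ∀ u ∈ Set.Icc (0:ℝ) τ, |Zbar u| ≤ S := by
    intro u hu
    have h1 := le_ciSup hbdd u
    rwa [ciSup_pos hu] at h1
  have h0mem : (0:ℝ) ∈ Set.Icc (0:ℝ) τ := ⟨le_refl 0, hτ.le⟩
  have hS0 : 0 ≤ S := (abs_nonneg _).trans (hS 0 h0mem)
  -- bound on h
  have hhb : ∀ u, |h u| ≤ S * (Ioc (0:ℝ) τ).indicator (fun _ => (1:ℝ)) u := by
    intro u
    by_cases hu : 0 < u
    · by_cases huτ : u ≤ τ
      · have hmem : u ∈ Ioc (0:ℝ) τ := ⟨hu, huτ⟩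
        rw [hhdef]
        simp only
        rw [Set.indicator_of_mem (show u ∈ Ioi (0:ℝ) from hu), Set.indicator_of_mem hmem, mul_one]
        have heq : (P (Ici u)).toReal - (N (Ici u)).toReal = Zbar u := by
          rw [← sm_apply μ measurableSet_Ici, hμdef,
            VectorMeasure.restrict_apply νZ hIcc measurableSet_Ici, hZbar u]
          congr 1
          ext y
          simp only [mem_inter_iff, mem_Ici, mem_Icc]
          constructor
          · rintro ⟨h1, _, h3⟩; exact ⟨h1, h3⟩
          · rintro ⟨h1, h2⟩; exact ⟨h1, hu.le.trans h1, h2⟩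
        rw [heq]
        exact hS u ⟨hu.le, huτ⟩
      · push_neg at huτ
        have hempty : Ici u ∩ Icc 0 τ = ∅ := by
          apply Set.eq_empty_iff_forall_notMem.mpr
          rintro y ⟨h1, _, h3⟩
          exact absurd (le_trans h1 h3) (not_le.mpr huτ)
        obtain ⟨hP0, hN0⟩ := hnull measurableSet_Ici hempty
        rw [hhdef]
        simp only
        rw [Set.indicator_of_mem (show u ∈ Ioi (0:ℝ) from hu), hP0, hN0,
          Set.indicator_of_notMem (fun hc : u ∈ Ioc (0:ℝ) τ => absurd hc.2 (not_le.mpr huτ))]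
        simp
    · rw [hhdef]
      simp only
      rw [Set.indicator_of_notMem (show u ∉ Ioi (0:ℝ) from hu),
        Set.indicator_of_notMem (fun hc : u ∈ Ioc (0:ℝ) τ => hu hc.1)]
      simp
  have hI1 := norm_int_le pF h S τ hhb
  have hI2 := norm_int_le nF h S τ hhb
  -- total variation
  have htv : (SignedMeasure.totalVariation νF (Set.Ioc 0 τ)).toReal
      = (pF (Ioc 0 τ)).toReal + (nF (Ioc 0 τ)).toReal := by
    have h1 : SignedMeasure.totalVariation νF (Set.Ioc 0 τ)
        = pF (Ioc 0 τ) + nF (Ioc 0 τ) := Measure.add_apply _ _ _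
    rw [h1, ENNReal.toReal_add (measure_ne_top _ _) (measure_ne_top _ _)]
  -- put everything together
  rw [hmain, hc0, htv]
  have habs : |Zbar 0 * F 0 + (∫ u, h u ∂pF - ∫ u, h u ∂nF)|
      ≤ |Zbar 0| * |F 0| + (|∫ u, h u ∂pF| + |∫ u, h u ∂nF|) := by
    calc |Zbar 0 * F 0 + (∫ u, h u ∂pF - ∫ u, h u ∂nF)|
        ≤ |Zbar 0 * F 0| + |∫ u, h u ∂pF - ∫ u, h u ∂nF| := abs_add_le _ _
      _ ≤ |Zbar 0| * |F 0| + (|∫ u, h u ∂pF| + |∫ u, h u ∂nF|) := by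
          rw [abs_mul]
          exact add_le_add_right (abs_sub _ _) _
  have h1 : |Zbar 0| * |F 0| ≤ S * |F 0| :=
    mul_le_mul_of_nonneg_right (hS 0 h0mem) (abs_nonneg _)
  have hring : S * (|F 0| + ((pF (Ioc 0 τ)).toReal + (nF (Ioc 0 τ)).toReal))
      = S * |F 0| + (S * (pF (Ioc 0 τ)).toReal + S * (nF (Ioc 0 τ)).toReal) := by ring
  rw [hSdef] at hring h1 hI1 hI2 ⊢
  linarith
end

section
/- Let ε ↦ F(ε) and ε ↦ G(ε) be real functions on an interval I containing 0, with ε₁ minimizing F and ε₀ minimizing G over I, both interior minima, and suppose F and G are twice differentiable with G''(ε) ≥ c > 0 on I and G'(ε₀) = 0. Suppose further that |F(ε) − G(ε) − (F(ε₀) − G(ε₀))| ≤ K|ε − ε₀| for all ε ∈ I (the difference process is Lipschitz with constant K at ε₀). Then |ε₁ − ε₀| ≤ 2K/c. -/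
/-- Abstract curvature argument from Appendix C: if `ε₁` minimizes `F` and `ε₀`
minimizes `G` over the interval `(a,b)` (interior minima), `G` is twice
differentiable with `G'' ≥ c > 0` and `G'(ε₀) = 0`, and the difference `F - G` is
`K`-Lipschitz at `ε₀`, then `|ε₁ - ε₀| ≤ 2K/c`. -/
theorem stmt15 (a b : ℝ) (hab : a < b) (h0 : (0 : ℝ) ∈ Set.Ioo a b)
    (F G F' F'' G' G'' : ℝ → ℝ) (c K : ℝ) (hc : 0 < c) (hK : 0 ≤ K)
    (hFd : ∀ x ∈ Set.Ioo a b, HasDerivAt F (F' x) x)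
    (hFd2 : ∀ x ∈ Set.Ioo a b, HasDerivAt F' (F'' x) x)
    (hGd : ∀ x ∈ Set.Ioo a b, HasDerivAt G (G' x) x)
    (hGd2 : ∀ x ∈ Set.Ioo a b, HasDerivAt G' (G'' x) x)
    (hG'' : ∀ x ∈ Set.Ioo a b, c ≤ G'' x)
    (ε₀ ε₁ : ℝ) (hε₀ : ε₀ ∈ Set.Ioo a b) (hε₁ : ε₁ ∈ Set.Ioo a b)
    (hminF : ∀ x ∈ Set.Ioo a b, F ε₁ ≤ F x)
    (hminG : ∀ x ∈ Set.Ioo a b, G ε₀ ≤ G x)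
    (hG'ε₀ : G' ε₀ = 0)
    (hLip : ∀ ε ∈ Set.Ioo a b, |F ε - G ε - (F ε₀ - G ε₀)| ≤ K * |ε - ε₀|) :
    |ε₁ - ε₀| ≤ 2 * K / c := by
  set H : ℝ → ℝ := fun x => G x - c / 2 * (x - ε₀) ^ 2 with hH
  set H' : ℝ → ℝ := fun x => G' x - c * (x - ε₀) with hH'
  have hHd : ∀ x ∈ Set.Ioo a b, HasDerivAt H (H' x) x := by
    intro x hx
    have h1 : HasDerivAt (fun x => c / 2 * (x - ε₀) ^ 2) (c * (x - ε₀)) x := by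
      have := (((hasDerivAt_id x).sub_const ε₀).pow 2).const_mul (c / 2)
      exact this.congr_deriv (by simp only [id_eq]; ring)
    exact (hGd x hx).sub h1
  have hHd2 : ∀ x ∈ Set.Ioo a b, HasDerivAt H' (G'' x - c) x := by
    intro x hx
    have h1 : HasDerivAt (fun x => c * (x - ε₀)) c x := by
      simpa using ((hasDerivAt_id x).sub_const ε₀).const_mul c
    exact (hGd2 x hx).sub h1
  -- H' is monotone on Ioo a b
  have hmono : MonotoneOn H' (Set.Ioo a b) := by
    apply monotoneOn_of_deriv_nonneg (convex_Ioo a b)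
    · exact fun x hx => ((hHd2 x hx).differentiableAt).continuousAt.continuousWithinAt
    · intro x hx
      rw [interior_Ioo] at hx
      exact ((hHd2 x hx).differentiableAt).differentiableWithinAt
    · intro x hx
      rw [interior_Ioo] at hx
      rw [(hHd2 x hx).deriv]
      linarith [hG'' x hx]
  have hH'ε₀ : H' ε₀ = 0 := by simp [hH', hG'ε₀]
  -- H ε₀ ≤ H ε₁
  have key : H ε₀ ≤ H ε₁ := by
    rcases lt_trichotomy ε₀ ε₁ with h | h | h
    · have hsub : Set.Icc ε₀ ε₁ ⊆ Set.Ioo a b :=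
        Set.Icc_subset_Ioo hε₀.1 hε₁.2
      obtain ⟨ξ, hξ, hξeq⟩ := exists_hasDerivAt_eq_slope H H' h
        (fun x hx => ((hHd x (hsub hx)).differentiableAt).continuousAt.continuousWithinAt)
        (fun x hx => hHd x (hsub (Set.Ioo_subset_Icc_self hx)))
      have hξm : ξ ∈ Set.Ioo a b := hsub (Set.Ioo_subset_Icc_self hξ)
      have h0le : 0 ≤ H' ξ := by
        rw [← hH'ε₀]
        exact hmono hε₀ hξm hξ.1.le
      rw [hξeq] at h0le
      have := div_nonneg_iff.mp h0le
      rcases this with ⟨hn, _⟩ | ⟨_, hd⟩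
      · linarith
      · nlinarith
    · simp [h]
    · have hsub : Set.Icc ε₁ ε₀ ⊆ Set.Ioo a b :=
        Set.Icc_subset_Ioo hε₁.1 hε₀.2
      obtain ⟨ξ, hξ, hξeq⟩ := exists_hasDerivAt_eq_slope H H' h
        (fun x hx => ((hHd x (hsub hx)).differentiableAt).continuousAt.continuousWithinAt)
        (fun x hx => hHd x (hsub (Set.Ioo_subset_Icc_self hx)))
      have hξm : ξ ∈ Set.Ioo a b := hsub (Set.Ioo_subset_Icc_self hξ)
      have h0le : H' ξ ≤ 0 := by
        rw [← hH'ε₀]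
        exact hmono hξm hε₀ hξ.2.le
      rw [hξeq] at h0le
      have hd : 0 < ε₀ - ε₁ := by linarith
      have := (div_nonpos_iff.mp h0le)
      rcases this with ⟨_, hd'⟩ | ⟨hn, _⟩
      · nlinarith
      · linarith
  -- curvature lower bound
  have hcurve : c / 2 * (ε₁ - ε₀) ^ 2 ≤ G ε₁ - G ε₀ := by
    simp only [hH] at key; linarith
  -- upper bound via Lipschitz and minimality of F
  have hupper : G ε₁ - G ε₀ ≤ K * |ε₁ - ε₀| := by
    have h1 := hLip ε₁ hε₁
    have h2 := hminF ε₀ hε₀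
    have h3 := abs_le.mp h1
    linarith [h3.1]
  set d := |ε₁ - ε₀| with hd
  have hsq : (ε₁ - ε₀) ^ 2 = d ^ 2 := (sq_abs _).symm
  have hmain : c / 2 * d ^ 2 ≤ K * d := by rw [← hsq]; linarith
  rcases eq_or_lt_of_le (abs_nonneg (ε₁ - ε₀)) with h | h
  · rw [hd, ← h]; positivity
  · have hdpos : 0 < d := h
    rw [le_div_iff₀ hc]
    nlinarith
end
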